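/- Let n ≥ 1, let w ≥ 1 be an integer and let c be a real cutoff level. Let (y, x) be an edge of the Boolean lattice with x = y^{⊕i} for a coordinate i with y_i = 1, let ℓ = h(y), and assume h(x) = ℓ − 1 ≥ ⌈c⌉. Then the probability that a random walk of length w down the Boolean lattice with cutoff at level c, from a uniform start, traverses the edge (y, x) equals 2^{−n} · (1/ℓ) · (1 + Σ_{i=1}^{w−1} ∏_{j=0}^{i−1} (n−ℓ−j)/(ℓ+i−j)). -/

import Mathlib

/-- Hamming weight of a point of the Boolean lattice `{0,1}^n`. -/
def hw {n : ℕ} (x : Fin n → Bool) : ℕ := (Finset.univ.filter (fun i => x i = true)).card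

/-- `bflip x i` is `x` with its `i`-th coordinate flipped. -/
def bflip {n : ℕ} (x : Fin n → Bool) (i : Fin n) : Fin n → Bool :=
  Function.update x i (!x i)

/-- The position of the walk after `t` steps, when the walk starts at `v` and
successively flips to 0 the coordinates of `v` that equal 1, in the order given by the
linear ordering `σ` of these coordinates. -/
def walkPos {n : ℕ} (v : Fin n → Bool) (σ : Fin (hw v) ≃ {i : Fin n // v i = true})
    (t : ℕ) : Fin n → Bool :=
  fun i => v i && ! decide (∃ s : Fin (hw v), (s : ℕ) < t ∧ (σ s).val = i)

/-- The number of steps performed by a random walk of length `w` down the Boolean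
lattice with cutoff at level `c`, when started at `v`:
`min(w, max(0, h(v) − ⌈c⌉))`. -/
noncomputable def nsteps {n : ℕ} (w : ℕ) (c : ℝ) (v : Fin n → Bool) : ℕ :=
  min w ((hw v : ℤ) - ⌈c⌉).toNat

/-- The probability of an event `P` in the finite probability space of pairs `(v, σ)`,
where `v` is uniform in `{0,1}^n` and `σ` is an independent uniformly random linear
ordering of the coordinates on which `v` equals 1. -/
noncomputable def walkProb {n : ℕ}
    (P : (v : Fin n → Bool) → (Fin (hw v) ≃ {i : Fin n // v i = true}) → Prop) : ℝ :=
  (2 ^ n : ℝ)⁻¹ * ∑ v : Fin n → Bool,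
    (Nat.card {σ : Fin (hw v) ≃ {i : Fin n // v i = true} // P v σ} : ℝ) /
      (Nat.factorial (hw v))

/-- The walk `(v, σ)` (of length `w`, with cutoff at level `c`) traverses the edge
`(y, x)` if at some step it moves from the point `y` to the point `x`. -/
def traverses {n : ℕ} (w : ℕ) (c : ℝ) (y x : Fin n → Bool)
    (v : Fin n → Bool) (σ : Fin (hw v) ≃ {i : Fin n // v i = true}) : Prop :=
  ∃ t : ℕ, t < nsteps w c v ∧ walkPos v σ t = y ∧ walkPos v σ (t + 1) = x

/-- The probability that a random walk of length `w` down the Boolean lattice with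
cutoff at level `c`, from a uniform start, traverses a fixed edge `(y, x)` with
`x = y^{⊕i}`, `y_i = 1`, `ℓ = h(y)` and `h(x) = ℓ − 1 ≥ ⌈c⌉`, equals
`2^{−n} · (1/ℓ) · (1 + Σ_{a=1}^{w−1} Π_{j=0}^{a−1} (n−ℓ−j)/(ℓ+a−j))`. -/
/- ## index functions -/

def gIdx (m a : ℕ) (s : Fin m) : Fin 3 :=
  if (s : ℕ) < a then 0 else if (s : ℕ) = a then 1 else 2

def fIdx {n : ℕ} (y : Fin n → Bool) (i : Fin n) (v : Fin n → Bool)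
    (j : {j : Fin n // v j = true}) : Fin 3 :=
  if y j.1 = false then 0 else if j.1 = i then 1 else 2

lemma gIdx_eq_zero {m a : ℕ} {s : Fin m} : gIdx m a s = 0 ↔ (s : ℕ) < a := by
  unfold gIdx; split_ifs with h1 h2 <;> simp_all

lemma gIdx_eq_one {m a : ℕ} {s : Fin m} : gIdx m a s = 1 ↔ (s : ℕ) = a := by
  unfold gIdx; split_ifs with h1 h2 <;> simp_all; omega

lemma gIdx_eq_two {m a : ℕ} {s : Fin m} : gIdx m a s = 2 ↔ a < (s : ℕ) := by
  unfold gIdx; split_ifs with h1 h2 <;> simp_all <;> omega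

variable {n : ℕ}

lemma fIdx_eq_zero {y v : Fin n → Bool} {i : Fin n} {j : {j : Fin n // v j = true}} :
    fIdx y i v j = 0 ↔ y j.1 = false := by
  unfold fIdx; split_ifs with h1 h2 <;> simp_all

lemma fIdx_eq_one {y v : Fin n → Bool} {i : Fin n} (hyi : y i = true)
    {j : {j : Fin n // v j = true}} : fIdx y i v j = 1 ↔ j.1 = i := by
  unfold fIdx; split_ifs with h1 h2 <;> simp_all
  rintro rfl; simp_all

lemma fIdx_eq_two {y v : Fin n → Bool} {i : Fin n} (hyi : y i = true)
    {j : {j : Fin n // v j = true}} : fIdx y i v j = 2 ↔ (y j.1 = true ∧ j.1 ≠ i) := by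
  unfold fIdx; split_ifs with h1 h2 <;> simp_all

lemma card_val_lt (m t : ℕ) (h : t ≤ m) : Fintype.card {s : Fin m // (s : ℕ) < t} = t := by
  have e : {s : Fin m // (s : ℕ) < t} ≃ Fin t :=
  { toFun := fun s => ⟨s.1, s.2⟩
    invFun := fun r => ⟨⟨r.1, lt_of_lt_of_le r.2 h⟩, r.2⟩
    left_inv := fun s => Subtype.ext (Fin.ext rfl)
    right_inv := fun r => Fin.ext rfl }
  simp [Fintype.card_congr e]

lemma card_val_gt (m a : ℕ) (h : a < m) :
    Fintype.card {s : Fin m // a < (s : ℕ)} = m - a - 1 := by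
  have e : {s : Fin m // a < (s : ℕ)} ≃ Fin (m - a - 1) :=
  { toFun := fun s => ⟨s.1.1 - a - 1, by have := s.1.2; have := s.2; omega⟩
    invFun := fun r => ⟨⟨r.1 + a + 1, by have := r.2; omega⟩, by simp⟩
    left_inv := fun s => Subtype.ext (Fin.ext (by have := s.2; simp; omega))
    right_inv := fun r => Fin.ext (by simp; omega) }
  simp [Fintype.card_congr e]

/- ## cardinalities of the coordinate classes -/

lemma card_O (v : Fin n → Bool) : Fintype.card {j : Fin n // v j = true} = hw v := by
  rw [Fintype.card_subtype]; rfl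

lemma card_Ytrue {y v : Fin n → Bool} (hY : ∀ j, y j = true → v j = true) :
    Fintype.card {j : {j : Fin n // v j = true} // y j.1 = true} = hw y := by
  have e : {j : {j : Fin n // v j = true} // y j.1 = true} ≃ {j : Fin n // y j = true} :=
  { toFun := fun j => ⟨j.1.1, j.2⟩
    invFun := fun j => ⟨⟨j.1, hY _ j.2⟩, j.2⟩
    left_inv := fun j => Subtype.ext (Subtype.ext rfl)
    right_inv := fun j => Subtype.ext rfl }
  rw [Fintype.card_congr e, Fintype.card_subtype]; rfl

lemma card_S {y v : Fin n → Bool} (hY : ∀ j, y j = true → v j = true) :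
    Fintype.card {j : {j : Fin n // v j = true} // y j.1 = false} = hw v - hw y := by
  have e0 : {j : {j : Fin n // v j = true} // y j.1 = false}
      ≃ {j : {j : Fin n // v j = true} // ¬ (y j.1 = true)} :=
    Equiv.subtypeEquivRight (by intro j; simp)
  rw [Fintype.card_congr e0, Fintype.card_subtype_compl, card_Ytrue hY, card_O]

/- ## the characterization of traversal -/

lemma hw_pos {y : Fin n → Bool} {i : Fin n} (hyi : y i = true) : 0 < hw y := by
  unfold hw
  exact Finset.card_pos.mpr ⟨i, Finset.mem_filter.mpr ⟨Finset.mem_univ _, hyi⟩⟩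

lemma trav_iff {w : ℕ} {c : ℝ} {y : Fin n → Bool} {i : Fin n} {ℓ a : ℕ}
    (hyi : y i = true) (hℓ : hw y = ℓ) (hcut : ⌈c⌉ ≤ (ℓ : ℤ) - 1)
    {v : Fin n → Bool} (hY : ∀ j, y j = true → v j = true) (hm : hw v = ℓ + a)
    (σ : Fin (hw v) ≃ {j : Fin n // v j = true}) :
    traverses w c y (bflip y i) v σ
      ↔ (a < w ∧ ∀ s, fIdx y i v (σ s) = gIdx (hw v) a s) := by
  have hl1 : 1 ≤ ℓ := hℓ ▸ hw_pos hyi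
  have hvi : v i = true := hY i hyi
  have ham : a < hw v := by omega
  have hexists : ∀ (t : ℕ) (s₀ : Fin (hw v)),
      (∃ s : Fin (hw v), (s : ℕ) < t ∧ (σ s).1 = (σ s₀).1) ↔ (s₀ : ℕ) < t := by
    intro t s₀
    constructor
    · rintro ⟨s, hs, he⟩
      rwa [σ.injective (Subtype.ext he)] at hs
    · intro h; exact ⟨s₀, h, rfl⟩
  have hwp : ∀ (t : ℕ) (s₀ : Fin (hw v)),
      walkPos v σ t (σ s₀).1 = !decide ((s₀ : ℕ) < t) := by
    intro t s₀
    show (v (σ s₀).1 && _) = _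
    rw [(σ s₀).2, Bool.true_and, decide_eq_decide.mpr (hexists t s₀)]
  constructor
  · rintro ⟨t, ht, hyt, hxt⟩
    have hy1 : ∀ s : Fin (hw v), ((s : ℕ) < t ↔ y (σ s).1 = false) := by
      intro s
      have h := congrFun hyt (σ s).1
      rw [hwp t s] at h
      constructor
      · intro hs; rw [← h]; simp [hs]
      · intro hys; rw [hys] at h; simpa using h
    have htm : t < hw v := by
      by_contra hle
      push_neg at hle
      have h2 := (hy1 (σ.symm ⟨i, hvi⟩)).mp (lt_of_lt_of_le (Fin.is_lt _) hle)
      rw [Equiv.apply_symm_apply] at h2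
      simp [hyi] at h2
    have hta : t = a := by
      have e1 : {s : Fin (hw v) // y (σ s).1 = false}
          ≃ {j : {j : Fin n // v j = true} // y j.1 = false} :=
        σ.subtypeEquiv (fun s => Iff.rfl)
      have e2 : {s : Fin (hw v) // (s : ℕ) < t} ≃ {s : Fin (hw v) // y (σ s).1 = false} :=
        Equiv.subtypeEquivRight (fun s => hy1 s)
      have hc : t = hw v - hw y := by
        rw [← card_val_lt (hw v) t htm.le, Fintype.card_congr (e2.trans e1), card_S hY]
      omega
    have haw : a < w := by
      have := min_le_left w ((hw v : ℤ) - ⌈c⌉).toNat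
      have : nsteps w c v ≤ w := this
      omega
    refine ⟨haw, fun s => ?_⟩
    rcases lt_trichotomy (s : ℕ) a with h | h | h
    · rw [gIdx_eq_zero.mpr h]
      exact fIdx_eq_zero.mpr ((hy1 s).mp (by omega))
    · have hys : y (σ s).1 = true := by
        cases hb : y (σ s).1 with
        | false => exact absurd ((hy1 s).mpr hb) (by omega)
        | true => rfl
      have hbf := congrFun hxt (σ s).1
      rw [hwp (t+1) s, decide_eq_true (show (s : ℕ) < t + 1 by omega)] at hbf
      have hji : (σ s).1 = i := by
        by_contra hne
        rw [show bflip y i (σ s).1 = y (σ s).1 from Function.update_of_ne hne _ _, hys] at hbf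
        simp at hbf
      rw [gIdx_eq_one.mpr h]
      exact (fIdx_eq_one hyi).mpr hji
    · have hys : y (σ s).1 = true := by
        cases hb : y (σ s).1 with
        | false => exact absurd ((hy1 s).mpr hb) (by omega)
        | true => rfl
      have hbf := congrFun hxt (σ s).1
      rw [hwp (t+1) s, decide_eq_false (show ¬((s : ℕ) < t + 1) by omega)] at hbf
      have hne : (σ s).1 ≠ i := by
        intro he
        rw [he] at hbf
        simp [bflip, hyi] at hbf
      rw [gIdx_eq_two.mpr h]
      exact (fIdx_eq_two hyi).mpr ⟨hys, hne⟩
  · rintro ⟨haw, hfg⟩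
    refine ⟨a, ?_, ?_, ?_⟩
    · have h1 : (a : ℤ) < (hw v : ℤ) - ⌈c⌉ := by
        have h2 : (hw v : ℤ) = (ℓ : ℤ) + (a : ℤ) := by exact_mod_cast congrArg (Nat.cast : ℕ → ℤ) hm
        omega
      exact lt_min haw (Int.lt_toNat.mpr h1)
    · funext j
      by_cases hvj : v j = true
      · have hσ : (σ (σ.symm ⟨j, hvj⟩)).1 = j := by rw [Equiv.apply_symm_apply]
        set s₀ := σ.symm ⟨j, hvj⟩
        have hwpj : walkPos v σ a j = !decide ((s₀ : ℕ) < a) := by rw [← hσ]; exact hwp a s₀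
        have hf := hfg s₀
        rw [hwpj]
        by_cases hyj : y j = true
        · have hns : ¬ ((s₀ : ℕ) < a) := by
            intro hlt
            rw [gIdx_eq_zero.mpr hlt] at hf
            have := fIdx_eq_zero.mp hf
            rw [hσ, hyj] at this
            exact Bool.noConfusion this
          simp [hns, hyj]
        · have hyj' : y j = false := by
            cases hb : y j with
            | false => rfl
            | true => exact absurd hb hyj
          have h0 : fIdx y i v (σ s₀) = 0 := fIdx_eq_zero.mpr (by rw [hσ]; exact hyj')
          rw [h0] at hf
          have hlt := gIdx_eq_zero.mp hf.symm
          simp [hlt, hyj']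
      · have hvj' : v j = false := by
          cases hb : v j with
          | false => rfl
          | true => exact absurd hb hvj
        have hyj : y j = false := by
          cases hb : y j with
          | false => rfl
          | true => exact absurd (hY j hb) hvj
        show (v j && _) = y j
        rw [hvj', hyj, Bool.false_and]
    · funext j
      by_cases hvj : v j = true
      · have hσ : (σ (σ.symm ⟨j, hvj⟩)).1 = j := by rw [Equiv.apply_symm_apply]
        set s₀ := σ.symm ⟨j, hvj⟩
        have hwpj : walkPos v σ (a+1) j = !decide ((s₀ : ℕ) < a + 1) := by
          rw [← hσ]; exact hwp (a+1) s₀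
        have hf := hfg s₀
        rw [hwpj]
        by_cases hji : j = i
        · have h1 : fIdx y i v (σ s₀) = 1 := (fIdx_eq_one hyi).mpr (by rw [hσ, hji])
          rw [h1] at hf
          have hs : (s₀ : ℕ) = a := gIdx_eq_one.mp hf.symm
          rw [hji]
          simp [show (s₀ : ℕ) < a + 1 by omega, bflip, hyi]
        · have hbne : bflip y i j = y j := Function.update_of_ne hji _ _
          rw [hbne]
          by_cases hyj : y j = true
          · have h2 : fIdx y i v (σ s₀) = 2 :=
              (fIdx_eq_two hyi).mpr ⟨by rw [hσ]; exact hyj, by rw [hσ]; exact hji⟩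
            rw [h2] at hf
            have hgt : a < (s₀ : ℕ) := gIdx_eq_two.mp hf.symm
            simp [show ¬((s₀ : ℕ) < a + 1) by omega, hyj]
          · have hyj' : y j = false := by
              cases hb : y j with
              | false => rfl
              | true => exact absurd hb hyj
            have h0 : fIdx y i v (σ s₀) = 0 := fIdx_eq_zero.mpr (by rw [hσ]; exact hyj')
            rw [h0] at hf
            have hlt := gIdx_eq_zero.mp hf.symm
            simp [show (s₀ : ℕ) < a + 1 by omega, hyj']
      · have hvj' : v j = false := by
          cases hb : v j with
          | false => rfl
          | true => exact absurd hb hvj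
        have hji : j ≠ i := by rintro rfl; exact hvj hvi
        have hyj : y j = false := by
          cases hb : y j with
          | false => rfl
          | true => exact absurd (hY j hb) hvj
        show (v j && _) = bflip y i j
        rw [hvj', Bool.false_and, show bflip y i j = y j from Function.update_of_ne hji _ _, hyj]

/- ## counting bijections compatible with fibers -/

section Fibers
variable {α β ι : Type*} (g : α → ι) (f : β → ι)

def sigTo (F : ∀ k, {x // g x = k} ≃ {y // f y = k}) (x : α) : β := (F (g x) ⟨x, rfl⟩).1
def sigInv (F : ∀ k, {x // g x = k} ≃ {y // f y = k}) (y : β) : α := ((F (f y)).symm ⟨y, rfl⟩).1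

lemma sig_aux1 (F : ∀ k, {x // g x = k} ≃ {y // f y = k}) (y : β) (k : ι) (h : f y = k) :
    ((F k).symm ⟨y, h⟩).1 = sigInv g f F y := by subst h; rfl

lemma sig_aux2 (F : ∀ k, {x // g x = k} ≃ {y // f y = k}) (x : α) (k : ι) (h : g x = k) :
    ((F k) ⟨x, h⟩).1 = sigTo g f F x := by subst h; rfl

lemma sig_left (F : ∀ k, {x // g x = k} ≃ {y // f y = k}) (x : α) :
    sigInv g f F (sigTo g f F x) = x := by
  have h : f (sigTo g f F x) = g x := (F (g x) ⟨x, rfl⟩).2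
  rw [← sig_aux1 g f F _ _ h]
  have h2 : (⟨sigTo g f F x, h⟩ : {y // f y = g x}) = F (g x) ⟨x, rfl⟩ := Subtype.ext rfl
  rw [h2, Equiv.symm_apply_apply]

lemma sig_right (F : ∀ k, {x // g x = k} ≃ {y // f y = k}) (y : β) :
    sigTo g f F (sigInv g f F y) = y := by
  have h : g (sigInv g f F y) = f y := ((F (f y)).symm ⟨y, rfl⟩).2
  rw [← sig_aux2 g f F _ _ h]
  have h2 : (⟨sigInv g f F y, h⟩ : {x // g x = f y}) = (F (f y)).symm ⟨y, rfl⟩ := Subtype.ext rfl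
  rw [h2, Equiv.apply_symm_apply]

def fiberEquiv : {σ : α ≃ β // ∀ x, f (σ x) = g x} ≃ ∀ k, {x // g x = k} ≃ {y // f y = k} where
  toFun σ k :=
  { toFun := fun x => ⟨σ.1 x.1, by rw [σ.2]; exact x.2⟩
    invFun := fun y => ⟨σ.1.symm y.1, by
      have h := σ.2 (σ.1.symm y.1)
      rw [Equiv.apply_symm_apply] at h
      rw [← h]; exact y.2⟩
    left_inv := fun x => Subtype.ext (Equiv.symm_apply_apply _ _)
    right_inv := fun y => Subtype.ext (Equiv.apply_symm_apply _ _) }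
  invFun F := ⟨⟨sigTo g f F, sigInv g f F, sig_left g f F, sig_right g f F⟩,
    fun x => (F (g x) ⟨x, rfl⟩).2⟩
  left_inv σ := Subtype.ext (Equiv.ext fun x => rfl)
  right_inv F := by
    funext k
    apply Equiv.ext
    intro x
    apply Subtype.ext
    exact (sig_aux2 g f F x.1 k x.2).symm ▸ rfl

lemma card_sigma_cond [Fintype α] [Fintype β] [Fintype ι]
    (h : ∀ k, Nat.card {x // g x = k} = Nat.card {y // f y = k}) :
    Nat.card {σ : α ≃ β // ∀ x, f (σ x) = g x}
      = ∏ k : ι, (Nat.card {x // g x = k}).factorial := by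
  classical
  rw [Nat.card_congr (fiberEquiv g f), Nat.card_pi]
  refine Finset.prod_congr rfl fun k _ => ?_
  rw [Nat.card_eq_fintype_card, Nat.card_eq_fintype_card,
    Fintype.card_equiv (Fintype.equivOfCardEq (by simpa [Nat.card_eq_fintype_card] using h k))]

end Fibers

/- ## fiber cardinalities -/

lemma card_g0 {m a : ℕ} (h : a ≤ m) : Nat.card {s : Fin m // gIdx m a s = 0} = a := by
  rw [Nat.card_eq_fintype_card,
    Fintype.card_congr (Equiv.subtypeEquivRight (fun s => gIdx_eq_zero)), card_val_lt m a h]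

lemma card_g1 {m a : ℕ} (h : a < m) : Nat.card {s : Fin m // gIdx m a s = 1} = 1 := by
  rw [Nat.card_eq_fintype_card, Fintype.card_congr
    (Equiv.subtypeEquivRight (fun s => gIdx_eq_one.trans
      ⟨fun hs => Fin.ext hs, fun hs => congrArg Fin.val hs⟩) :
        _ ≃ {s : Fin m // s = ⟨a, h⟩}), Fintype.card_subtype_eq]

lemma card_g2 {m a : ℕ} (h : a < m) : Nat.card {s : Fin m // gIdx m a s = 2} = m - a - 1 := by
  rw [Nat.card_eq_fintype_card,
    Fintype.card_congr (Equiv.subtypeEquivRight (fun s => gIdx_eq_two)), card_val_gt m a h]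

lemma card_f0 {y v : Fin n → Bool} {i : Fin n} (hY : ∀ j, y j = true → v j = true) :
    Nat.card {j : {j : Fin n // v j = true} // fIdx y i v j = 0} = hw v - hw y := by
  rw [Nat.card_eq_fintype_card,
    Fintype.card_congr (Equiv.subtypeEquivRight (fun j => fIdx_eq_zero)), card_S hY]

lemma card_f1 {y v : Fin n → Bool} {i : Fin n} (hyi : y i = true) (hvi : v i = true) :
    Nat.card {j : {j : Fin n // v j = true} // fIdx y i v j = 1} = 1 := by
  rw [Nat.card_eq_fintype_card, Fintype.card_congr
    (Equiv.subtypeEquivRight (fun j => (fIdx_eq_one hyi).trans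
      ⟨fun hs => Subtype.ext hs, fun hs => congrArg Subtype.val hs⟩) :
        _ ≃ {j : {j : Fin n // v j = true} // j = ⟨i, hvi⟩}), Fintype.card_subtype_eq]

lemma card_f2 {y v : Fin n → Bool} {i : Fin n} (hyi : y i = true)
    (hY : ∀ j, y j = true → v j = true) :
    Nat.card {j : {j : Fin n // v j = true} // fIdx y i v j = 2} = hw y - 1 := by
  have e : {j : {j : Fin n // v j = true} // fIdx y i v j = 2}
      ≃ {x : {j : Fin n // y j = true} // ¬ (x = ⟨i, hyi⟩)} :=
  { toFun := fun j => ⟨⟨j.1.1, ((fIdx_eq_two hyi).mp j.2).1⟩,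
      fun h => ((fIdx_eq_two hyi).mp j.2).2 (congrArg Subtype.val h)⟩
    invFun := fun x => ⟨⟨x.1.1, hY _ x.1.2⟩,
      (fIdx_eq_two hyi).mpr ⟨x.1.2, fun h => x.2 (Subtype.ext h)⟩⟩
    left_inv := fun j => Subtype.ext (Subtype.ext rfl)
    right_inv := fun x => Subtype.ext (Subtype.ext rfl) }
  rw [Nat.card_eq_fintype_card, Fintype.card_congr e, Fintype.card_subtype_compl,
    Fintype.card_subtype_eq, Fintype.card_subtype]
  rfl

/- ## the count for a good starting point -/

lemma Nv_good {w : ℕ} {c : ℝ} {y : Fin n → Bool} {i : Fin n} {ℓ a : ℕ}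
    (hyi : y i = true) (hℓ : hw y = ℓ) (hcut : ⌈c⌉ ≤ (ℓ : ℤ) - 1)
    {v : Fin n → Bool} (hY : ∀ j, y j = true → v j = true) (hm : hw v = ℓ + a)
    (haw : a < w) :
    Nat.card {σ : Fin (hw v) ≃ {j : Fin n // v j = true} //
        traverses w c y (bflip y i) v σ}
      = Nat.factorial a * Nat.factorial (ℓ - 1) := by
  have hl1 : 1 ≤ ℓ := hℓ ▸ hw_pos hyi
  have ham : a < hw v := by omega
  have e : {σ : Fin (hw v) ≃ {j : Fin n // v j = true} // traverses w c y (bflip y i) v σ}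
      ≃ {σ : Fin (hw v) ≃ {j : Fin n // v j = true} //
          ∀ s, fIdx y i v (σ s) = gIdx (hw v) a s} :=
    Equiv.subtypeEquivRight (fun σ =>
      (trav_iff hyi hℓ hcut hY hm σ).trans (and_iff_right haw))
  rw [Nat.card_congr e, card_sigma_cond (gIdx (hw v) a) (fIdx y i v) ?hfib]
  case hfib =>
    intro k
    fin_cases k
    · show Nat.card {s // gIdx (hw v) a s = 0} = Nat.card {j // fIdx y i v j = 0}
      rw [card_g0 ham.le, card_f0 hY, hℓ, hm]; omega
    · show Nat.card {s // gIdx (hw v) a s = 1} = Nat.card {j // fIdx y i v j = 1}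
      rw [card_g1 ham, card_f1 hyi (hY i hyi)]
    · show Nat.card {s // gIdx (hw v) a s = 2} = Nat.card {j // fIdx y i v j = 2}
      rw [card_g2 ham, card_f2 hyi hY, hℓ]; omega
  rw [Fin.prod_univ_three, card_g0 ham.le, card_g1 ham, card_g2 ham,
    show hw v - a - 1 = ℓ - 1 by omega]
  simp [Nat.factorial]

/- ## per-start-point value -/

lemma hw_mono {y v : Fin n → Bool} (hY : ∀ j, y j = true → v j = true) : hw y ≤ hw v :=
  Finset.card_le_card (fun j hj => Finset.mem_filter.mpr
    ⟨Finset.mem_univ _, hY j (Finset.mem_filter.mp hj).2⟩)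

lemma trav_needs_Y {w : ℕ} {c : ℝ} {y x v : Fin n → Bool}
    {σ : Fin (hw v) ≃ {j : Fin n // v j = true}} (h : traverses w c y x v σ) :
    ∀ j, y j = true → v j = true := by
  obtain ⟨t, -, hyt, -⟩ := h
  intro j hj
  have hcf := congrFun hyt j
  simp only [walkPos, hj, Bool.and_eq_true] at hcf
  exact hcf.1

noncomputable def Dterm (w ℓ a : ℕ) : ℝ :=
  if a < w then ((Nat.factorial a * Nat.factorial (ℓ - 1) : ℕ) : ℝ)
      / ((Nat.factorial (ℓ + a) : ℕ) : ℝ)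
    else 0

lemma perv {w : ℕ} {c : ℝ} {y : Fin n → Bool} {i : Fin n} {ℓ : ℕ}
    (hyi : y i = true) (hℓ : hw y = ℓ) (hcut : ⌈c⌉ ≤ (ℓ : ℤ) - 1) (v : Fin n → Bool) :
    (Nat.card {σ : Fin (hw v) ≃ {j : Fin n // v j = true} //
        traverses w c y (bflip y i) v σ} : ℝ) / ((hw v).factorial : ℝ)
      = if (∀ j, y j = true → v j = true) then Dterm w ℓ (hw v - ℓ) else 0 := by
  by_cases hY : ∀ j, y j = true → v j = true
  · rw [if_pos hY]
    have hm : hw v = ℓ + (hw v - ℓ) := by have := hw_mono hY; omega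
    by_cases haw : hw v - ℓ < w
    · rw [Nv_good hyi hℓ hcut hY hm haw, Dterm, if_pos haw]
      rw [show ℓ + (hw v - ℓ) = hw v from hm.symm]
    · have he : IsEmpty {σ : Fin (hw v) ≃ {j : Fin n // v j = true} //
          traverses w c y (bflip y i) v σ} :=
        ⟨fun σs => haw ((trav_iff hyi hℓ hcut hY hm σs.1).mp σs.2).1⟩
      rw [Nat.card_of_isEmpty, Dterm, if_neg haw, Nat.cast_zero, zero_div]
  · rw [if_neg hY]
    have he : IsEmpty {σ : Fin (hw v) ≃ {j : Fin n // v j = true} //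
        traverses w c y (bflip y i) v σ} :=
      ⟨fun σs => hY (trav_needs_Y σs.2)⟩
    rw [Nat.card_of_isEmpty, Nat.cast_zero, zero_div]

/- ## reindexing the sum over starting points -/

def EY (y : Fin n → Bool) :
    ({j : Fin n // y j = false} → Bool) ≃ {v : Fin n → Bool // ∀ j, y j = true → v j = true} where
  toFun u := ⟨fun j => if h : y j = true then true else u ⟨j, Bool.eq_false_iff.mpr h⟩,
    fun j hj => by simp [hj]⟩
  invFun v k := v.1 k.1
  left_inv u := by
    funext k
    have hk : ¬ (y k.1 = true) := by simp [k.2]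
    simp only [dif_neg hk]
  right_inv v := by
    apply Subtype.ext
    funext j
    by_cases h : y j = true
    · simp only [dif_pos h]; exact (v.2 j h).symm
    · simp only [dif_neg h]

lemma hw_EY (y : Fin n → Bool) (u : {j : Fin n // y j = false} → Bool) :
    hw ((EY y u).1) = hw y + Fintype.card {k : {j : Fin n // y j = false} // u k = true} := by
  have e : {j : Fin n // (EY y u).1 j = true}
      ≃ {j : Fin n // y j = true} ⊕ {k : {j : Fin n // y j = false} // u k = true} :=
  { toFun := fun j =>
      if h : y j.1 = true then Sum.inl ⟨j.1, h⟩
      else Sum.inr ⟨⟨j.1, Bool.eq_false_iff.mpr h⟩, by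
        have hj := j.2
        rwa [show (EY y u).1 j.1 = u ⟨j.1, Bool.eq_false_iff.mpr h⟩ from dif_neg h] at hj⟩
    invFun := fun z => match z with
      | Sum.inl jy => ⟨jy.1, by show (if h : y jy.1 = true then true else _) = true; rw [dif_pos jy.2]⟩
      | Sum.inr ku => ⟨ku.1.1, by
          show (if h : y ku.1.1 = true then true else u ⟨ku.1.1, _⟩) = true
          rw [dif_neg (by simp [ku.1.2])]
          exact (congrArg u (Subtype.ext rfl)).trans ku.2⟩
    left_inv := fun j => by
      by_cases h : y j.1 = true
      · simp only [dif_pos h]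
      · simp only [dif_neg h]
    right_inv := fun z => by
      match z with
      | Sum.inl jy => simp only [dif_pos jy.2]
      | Sum.inr ku =>
        have h : ¬ (y ku.1.1 = true) := by simp [ku.1.2]
        simp only [dif_neg h] }
  rw [← card_O, Fintype.card_congr e, Fintype.card_sum]
  congr 1
  rw [Fintype.card_subtype]
  rfl

def funFinsetEquiv (α : Type*) [Fintype α] [DecidableEq α] : (α → Bool) ≃ Finset α where
  toFun u := Finset.univ.filter (fun k => u k = true)
  invFun s := fun k => decide (k ∈ s)
  left_inv u := by
    funext k
    by_cases h : u k = true <;> simp_all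
  right_inv s := by ext k; simp

lemma card_K {y : Fin n → Bool} {ℓ : ℕ} (hℓ : hw y = ℓ) :
    Fintype.card {j : Fin n // y j = false} = n - ℓ := by
  have e : {j : Fin n // y j = false} ≃ {j : Fin n // ¬ (y j = true)} :=
    Equiv.subtypeEquivRight (by intro j; simp)
  rw [Fintype.card_congr e, Fintype.card_subtype_compl, Fintype.card_fin,
    Fintype.card_subtype, show (Finset.univ.filter fun j => y j = true).card = ℓ from hℓ]

lemma sum_over_Y {y : Fin n → Bool} {ℓ : ℕ} (hℓ : hw y = ℓ) (D : ℕ → ℝ) :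
    ∑ v : Fin n → Bool, (if (∀ j, y j = true → v j = true) then D (hw v - ℓ) else 0)
      = ∑ m ∈ Finset.range ((n - ℓ) + 1), ((n - ℓ).choose m : ℝ) * D m := by
  classical
  rw [← Finset.sum_filter]
  rw [Finset.sum_subtype (p := fun v => ∀ j, y j = true → v j = true)
    (Finset.univ.filter _) (fun v => by simp) (fun v => D (hw v - ℓ))]
  rw [← Equiv.sum_comp (EY y) (fun vs => D (hw vs.1 - ℓ))]
  have hb : ∀ u : {j : Fin n // y j = false} → Bool,
      hw ((EY y) u).1 - ℓ = (Finset.univ.filter (fun k => u k = true)).card := by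
    intro u
    rw [hw_EY, hℓ, Fintype.card_subtype]
    omega
  rw [Finset.sum_congr rfl (fun u _ => by rw [hb u])]
  rw [show (fun u : {j : Fin n // y j = false} → Bool =>
      D (Finset.univ.filter (fun k => u k = true)).card)
    = (fun u => (fun s : Finset {j : Fin n // y j = false} => D s.card)
        (funFinsetEquiv _ u)) from rfl]
  rw [Equiv.sum_comp (funFinsetEquiv {j : Fin n // y j = false})
    (fun s => D s.card)]
  rw [← Finset.powerset_univ, Finset.sum_powerset_apply_card (fun m => D m)]
  rw [Finset.card_univ, card_K hℓ]
  refine Finset.sum_congr rfl fun m _ => ?_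
  rw [nsmul_eq_mul]

lemma term_full {ℓ : ℕ} (n : ℕ) (m : ℕ) (hln : ℓ ≤ n) (hl1 : 1 ≤ ℓ) :
    ((n - ℓ).choose m : ℝ) * ((Nat.factorial m * Nat.factorial (ℓ - 1) : ℕ) : ℝ)
        / ((Nat.factorial (ℓ + m) : ℕ) : ℝ)
      = (1 / (ℓ : ℝ)) * ∏ j ∈ Finset.range m, (((n : ℝ) - ℓ - j) / ((ℓ : ℝ) + m - j)) := by
  set k := n - ℓ with hk
  have hcast : (n : ℝ) - ℓ = (k : ℝ) := by
    rw [hk, Nat.cast_sub hln]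
  rw [Finset.prod_div_distrib]
  have hnum : ∏ j ∈ Finset.range m, ((n : ℝ) - ℓ - j) = (k.descFactorial m : ℝ) := by
    by_cases hmk : m ≤ k
    · rw [Nat.descFactorial_eq_prod_range, Nat.cast_prod]
      refine Finset.prod_congr rfl fun j hj => ?_
      rw [hcast, ← Nat.cast_sub (le_trans (le_of_lt (Finset.mem_range.mp hj)) hmk)]
    · rw [Nat.descFactorial_eq_zero_iff_lt.mpr (by omega), Nat.cast_zero]
      refine Finset.prod_eq_zero (Finset.mem_range.mpr (show k < m by omega)) ?_
      rw [hcast]; ring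
  have hden : ∏ j ∈ Finset.range m, ((ℓ : ℝ) + m - j) = ((ℓ + m).descFactorial m : ℝ) := by
    rw [Nat.descFactorial_eq_prod_range, Nat.cast_prod]
    refine Finset.prod_congr rfl fun j hj => ?_
    have hj' := Finset.mem_range.mp hj
    rw [Nat.cast_sub (show j ≤ ℓ + m by omega), Nat.cast_add]
  rw [hnum, hden]
  have h1 : ((ℓ + m).factorial : ℝ)
      = (ℓ : ℝ) * ((ℓ - 1).factorial : ℝ) * ((ℓ + m).descFactorial m : ℝ) := by
    have h2 := Nat.factorial_mul_descFactorial (Nat.le_add_left m ℓ)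
    rw [show ℓ + m - m = ℓ by omega] at h2
    rw [← h2, ← Nat.mul_factorial_pred (show ℓ ≠ 0 by omega)]
    push_cast
    ring
  have h2 : (k.descFactorial m : ℝ) = (m.factorial : ℝ) * (k.choose m : ℝ) := by
    rw [← Nat.cast_mul, ← Nat.descFactorial_eq_factorial_mul_choose]
  have hd : ((ℓ + m).descFactorial m : ℝ) ≠ 0 := by
    rw [Nat.cast_ne_zero]
    intro h0
    exact absurd (Nat.descFactorial_eq_zero_iff_lt.mp h0) (by omega)
  have hl0 : (ℓ : ℝ) ≠ 0 := Nat.cast_ne_zero.mpr (by omega)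
  have hf : (((ℓ - 1).factorial : ℕ) : ℝ) ≠ 0 := Nat.cast_ne_zero.mpr (Nat.factorial_ne_zero _)
  have hmf : ((m.factorial : ℕ) : ℝ) ≠ 0 := Nat.cast_ne_zero.mpr (Nat.factorial_ne_zero _)
  rw [h1, h2]
  push_cast
  field_simp

theorem prob_traverse_edge (n : ℕ) (hn : 1 ≤ n) (w : ℕ) (hw1 : 1 ≤ w) (c : ℝ)
    (y : Fin n → Bool) (i : Fin n) (hyi : y i = true) (ℓ : ℕ) (hℓ : hw y = ℓ)
    (hcut : ⌈c⌉ ≤ (ℓ : ℤ) - 1) :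
    walkProb (fun v σ => traverses w c y (bflip y i) v σ)
      = (2 ^ n : ℝ)⁻¹ * (1 / ℓ) *
        (1 + ∑ a ∈ Finset.Icc 1 (w - 1), ∏ j ∈ Finset.range a,
          ((n : ℝ) - ℓ - j) / ((ℓ : ℝ) + a - j)) := by
  
  have hl1 : 1 ≤ ℓ := hℓ ▸ hw_pos hyi
  have hln : ℓ ≤ n := by
    have h2 : hw y ≤ n := by
      unfold hw
      exact le_trans (Finset.card_filter_le _ _) (by simp)
    omega
  simp only [walkProb]
  rw [mul_assoc]
  congr 1
  rw [Finset.sum_congr rfl (fun v _ => perv hyi hℓ hcut v), sum_over_Y hℓ (Dterm w ℓ)]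
  -- pure arithmetic from here
  set K := n - ℓ with hK
  set M := max w (K + 1) with hM
  have hstep1 : ∑ m ∈ Finset.range (K + 1), ((K).choose m : ℝ) * Dterm w ℓ m
      = ∑ m ∈ Finset.range M, ((K).choose m : ℝ) * Dterm w ℓ m := by
    refine Finset.sum_subset (Finset.range_subset_range.mpr (le_max_right _ _)) ?_
    intro m hm hnm
    rw [Nat.choose_eq_zero_of_lt (by simp at hm hnm ⊢; omega), Nat.cast_zero, zero_mul]
  have hstep2 : ∑ m ∈ Finset.range M, ((K).choose m : ℝ) * Dterm w ℓ m
      = ∑ m ∈ Finset.range w,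
          (1 / (ℓ : ℝ)) * ∏ j ∈ Finset.range m, (((n : ℝ) - ℓ - j) / ((ℓ : ℝ) + m - j)) := by
    have hfil : (Finset.range M).filter (· < w) = Finset.range w := by
      ext m
      simp only [Finset.mem_filter, Finset.mem_range]
      constructor
      · rintro ⟨-, h⟩; exact h
      · intro h; exact ⟨lt_of_lt_of_le h (le_max_left _ _), h⟩
    rw [← hfil, Finset.sum_filter]
    refine Finset.sum_congr rfl fun m _ => ?_
    by_cases hmw : m < w
    · rw [if_pos hmw, Dterm, if_pos hmw, ← mul_div_assoc]
      exact term_full n m hln hl1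
    · rw [if_neg hmw, Dterm, if_neg hmw, mul_zero]
  rw [hstep1, hstep2, ← Finset.mul_sum]
  rw [Finset.sum_range_eq_add_Ico _ (show 0 < w by omega), ← Finset.Ico_add_one_right_eq_Icc,
    show w - 1 + 1 = w by omega]
  simp
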